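/- Let H be a discrete Schrödinger operator with bounded potential, ψ ∈ ℓ²(ℤ), E₀ ∈ ℝ, ε > 0, and let a ≤ b be integers, I = [a,b] ∩ ℤ. For z ∈ ℂ∖ℝ let u_z = (H − z)^{−1}ψ. Suppose that lim_{δ→0⁺} inf{ |u_z(b+1)|² + |u_z(b)|² + |u_z(a)|² + |u_z(a−1)|² : z ∈ ℂ∖ℝ, |z − E₀| < δ } < ε. Then for every solution v of Hv = E₀v: | Σ_{n=a}^{b} v(n) \overline{ψ(n)} | ≤ √ε · ( ‖V(b)‖ + ‖V(a−1)‖ ). -/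

import Mathlib

open MeasureTheory Filter Set
noncomputable section

abbrev Seq2 := lp (fun _ : ℤ => ℂ) 2

/-- `H` acts as the discrete Schrödinger operator with potential `W`. -/
def IsSchrodinger (W : ℤ → ℝ) (H : Seq2 →L[ℂ] Seq2) : Prop :=
  ∀ ψ : Seq2, ∀ n : ℤ,
    (H ψ) n = ψ (n + 1) + ψ (n - 1) + (W n : ℂ) * ψ n

/-- The unitary group `e^{-itH}`. -/
def timeEvol (H : Seq2 →L[ℂ] Seq2) (t : ℝ) : Seq2 →L[ℂ] Seq2 :=
  NormedSpace.exp ((-(t : ℂ) * Complex.I) • H)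

/-- Time-averaged probability `a(ψ,n,T)`. -/
def aFun (H : Seq2 →L[ℂ] Seq2) (ψ : Seq2) (n : ℤ) (T : ℝ) : ℝ :=
  (2 / T) * ∫ t in Set.Ioi (0 : ℝ), Real.exp (-2 * t / T) * ‖(timeEvol H t ψ) n‖ ^ 2

/-- Right outside probability `P_r(ψ,N,T)`. -/
def Pright (H : Seq2 →L[ℂ] Seq2) (ψ : Seq2) (N T : ℝ) : ℝ :=
  ∑' n : ℤ, if N ≤ (n : ℝ) then aFun H ψ n T else 0

/-- Left outside probability `P_l(ψ,N,T)`. -/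
def Pleft (H : Seq2 →L[ℂ] Seq2) (ψ : Seq2) (N T : ℝ) : ℝ :=
  ∑' n : ℤ, if (n : ℝ) ≤ -N then aFun H ψ n T else 0

/-- Outside probability `P(ψ,N,T)`. -/
def Pout (H : Seq2 →L[ℂ] Seq2) (ψ : Seq2) (N T : ℝ) : ℝ :=
  Pright H ψ N T + Pleft H ψ N T

/-- Moments of the position operator `⟨|X_ψ|^p⟩(T)`. -/
def moment (H : Seq2 →L[ℂ] Seq2) (ψ : Seq2) (p T : ℝ) : ℝ :=
  ∑' n : ℤ, |(n : ℝ)| ^ p * aFun H ψ n T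

/-- Upper transport exponent `β⁺(ψ,p)`. -/
def betaPlus (H : Seq2 →L[ℂ] Seq2) (ψ : Seq2) (p : ℝ) : ℝ :=
  limsup (fun T : ℝ => Real.log (moment H ψ p T) / (p * Real.log T)) atTop

/-- Lower transport exponent `β⁻(ψ,p)`. -/
def betaMinus (H : Seq2 →L[ℂ] Seq2) (ψ : Seq2) (p : ℝ) : ℝ :=
  liminf (fun T : ℝ => Real.log (moment H ψ p T) / (p * Real.log T)) atTop

/-- `S⁺(ψ,α)`. -/
def SPlus (H : Seq2 →L[ℂ] Seq2) (ψ : Seq2) (α : ℝ) : EReal :=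
  -limsup (fun T : ℝ => ((Real.log (Pout H ψ (T ^ α) T) / Real.log T : ℝ) : EReal)) atTop

/-- `S⁻(ψ,α)`. -/
def SMinus (H : Seq2 →L[ℂ] Seq2) (ψ : Seq2) (α : ℝ) : EReal :=
  -liminf (fun T : ℝ => ((Real.log (Pout H ψ (T ^ α) T) / Real.log T : ℝ) : EReal)) atTop

/-- Upper transport exponent `α_u⁺(ψ) = sup {α > 0 : S⁺(ψ,α) < ∞}` (`sup ∅ = 0`). -/
def alphaUPlus (H : Seq2 →L[ℂ] Seq2) (ψ : Seq2) : EReal :=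
  sSup (insert (0 : EReal) {x : EReal | ∃ α : ℝ, x = (α : EReal) ∧ 0 < α ∧ SPlus H ψ α < ⊤})

/-- Upper transport exponent `α_u⁻(ψ) = sup {α > 0 : S⁻(ψ,α) < ∞}` (`sup ∅ = 0`). -/
def alphaUMinus (H : Seq2 →L[ℂ] Seq2) (ψ : Seq2) : EReal :=
  sSup (insert (0 : EReal) {x : EReal | ∃ α : ℝ, x = (α : EReal) ∧ 0 < α ∧ SMinus H ψ α < ⊤})

/-- One-step transfer matrix `A(n,z)`. -/
def Amat (W : ℤ → ℝ) (n : ℤ) (z : ℂ) : Matrix (Fin 2) (Fin 2) ℂ :=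
  !![z - (W n : ℂ), -1; 1, 0]

/-- Transfer matrix `M(n,k;z)`. -/
def Tmat (W : ℤ → ℝ) (n k : ℤ) (z : ℂ) : Matrix (Fin 2) (Fin 2) ℂ :=
  if k ≤ n then (((List.range (n - k).toNat).map fun j => Amat W (n - j) z).prod)
  else (((List.range (k - n).toNat).map fun j => (Amat W (n + 1 + j) z)⁻¹).prod)

/-- Operator (Euclidean) norm of a 2×2 complex matrix. -/
def opNorm2 (M : Matrix (Fin 2) (Fin 2) ℂ) : ℝ :=
  ‖Matrix.toEuclideanCLM (𝕜 := ℂ) M‖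

/-- `ψ` has exponentially decaying entries. -/
def ExpDecaying (ψ : Seq2) : Prop :=
  ∃ D a : ℝ, 0 < D ∧ 0 < a ∧ ∀ n : ℤ, ‖ψ n‖ ≤ D * Real.exp (-a * |(n : ℝ)|)

/-- `v` is a formal solution of `Hv = Ev` for the potential `W`. -/
def IsSolution (W : ℤ → ℝ) (E : ℝ) (v : ℤ → ℝ) : Prop :=
  ∀ n : ℤ, v (n + 1) + v (n - 1) + W n * v n = E * v n

/-- `max_{n ∈ S} ‖M(n,k;z)‖`. -/
def maxTM (W : ℤ → ℝ) (k : ℤ) (S : Set ℤ) (z : ℂ) : ℝ :=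
  sSup ((fun n => opNorm2 (Tmat W n k z)) '' S)


lemma sq_summable (x : Seq2) : Summable (fun n : ℤ => ‖x n‖ ^ 2) := by
  have := (lp.memℓp x).summable (p := 2) (by norm_num)
  simpa [Real.rpow_natCast] using this

lemma shift_summable (x : Seq2) (c : ℤ) : Summable (fun n : ℤ => ‖x (n + c)‖ ^ 2) :=
  ((Equiv.addRight c).summable_iff (f := fun n : ℤ => ‖x n‖ ^ 2)).2 (sq_summable x)

set_option maxHeartbeats 1000000 in
lemma norm_prod_summable (x y : Seq2) (c d : ℤ) :
    Summable (fun n : ℤ => ‖x (n + c)‖ * ‖y (n + d)‖) := by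
  refine Summable.of_nonneg_of_le
    (fun n => mul_nonneg (norm_nonneg _) (norm_nonneg _)) (fun n => ?_)
    (((shift_summable x c).add (shift_summable y d)).div_const 2)
  nlinarith [sq_nonneg (‖x (n + c)‖ - ‖y (n + d)‖), norm_nonneg (x (n+c)), norm_nonneg (y (n+d))]

set_option maxHeartbeats 1000000 in
lemma prod_summable (x y : Seq2) (c d : ℤ) :
    Summable (fun n : ℤ => (starRingEnd ℂ) (x (n + c)) * y (n + d)) := by
  apply Summable.of_norm
  simpa [RCLike.norm_conj] using norm_prod_summable x y c d

set_option maxHeartbeats 1000000 in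
lemma prod_summable_W (W : ℤ → ℝ) (B : ℝ) (hB : ∀ n, |W n| ≤ B) (x y : Seq2) :
    Summable (fun n : ℤ => (starRingEnd ℂ) (x n) * ((W n : ℂ) * y n)) := by
  apply Summable.of_norm
  refine Summable.of_nonneg_of_le (fun n => norm_nonneg _) (fun n => ?_)
    (((norm_prod_summable x y 0 0).mul_left (|B| + 1)))
  simp only [norm_mul, RCLike.norm_conj, Complex.norm_real, Real.norm_eq_abs, add_zero]
  have h1 : |W n| ≤ |B| + 1 := le_trans (hB n) (by cases abs_cases B <;> linarith)
  have h2 : ‖x n‖ * (|W n| * ‖y n‖) = |W n| * (‖x n‖ * ‖y n‖) := by ring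
  rw [h2]
  exact mul_le_mul_of_nonneg_right h1 (mul_nonneg (norm_nonneg _) (norm_nonneg _))

set_option maxHeartbeats 2000000 in
lemma schrodinger_selfAdjoint (W : ℤ → ℝ) (B : ℝ) (hB : ∀ n, |W n| ≤ B)
    (H : Seq2 →L[ℂ] Seq2) (hH : IsSchrodinger W H) : IsSelfAdjoint H := by
  rw [ContinuousLinearMap.isSelfAdjoint_iff_isSymmetric]
  intro x y
  rw [lp.inner_eq_tsum, lp.inner_eq_tsum]
  simp only [RCLike.inner_apply']
  have S1 : Summable (fun n : ℤ => (starRingEnd ℂ) (x (n + 1)) * y n) := by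
    simpa using prod_summable x y 1 0
  have S2 : Summable (fun n : ℤ => (starRingEnd ℂ) (x (n - 1)) * y n) := by
    simpa [sub_eq_add_neg] using prod_summable x y (-1) 0
  have S3 := prod_summable_W W B hB x y
  have T1 : Summable (fun n : ℤ => (starRingEnd ℂ) (x n) * y (n + 1)) := by
    simpa using prod_summable x y 0 1
  have T2 : Summable (fun n : ℤ => (starRingEnd ℂ) (x n) * y (n - 1)) := by
    simpa [sub_eq_add_neg] using prod_summable x y 0 (-1)
  have hL : ∀ n : ℤ, (starRingEnd ℂ) ((H x) n) * y n =
      (starRingEnd ℂ) (x (n + 1)) * y n + ((starRingEnd ℂ) (x (n - 1)) * y n +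
        (starRingEnd ℂ) (x n) * ((W n : ℂ) * y n)) := by
    intro n
    rw [hH x n]
    simp only [map_add, map_mul, Complex.conj_ofReal]
    ring
  have hR : ∀ n : ℤ, (starRingEnd ℂ) (x n) * (H y) n =
      (starRingEnd ℂ) (x n) * y (n + 1) + ((starRingEnd ℂ) (x n) * y (n - 1) +
        (starRingEnd ℂ) (x n) * ((W n : ℂ) * y n)) := by
    intro n
    rw [hH y n]
    ring
  have hA : (∑' n : ℤ, (starRingEnd ℂ) (x (n + 1)) * y n)
      = ∑' n : ℤ, (starRingEnd ℂ) (x n) * y (n - 1) := by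
    have := (Equiv.addRight (1 : ℤ)).tsum_eq
      (fun m : ℤ => (starRingEnd ℂ) (x m) * y (m - 1))
    simpa only [Equiv.coe_addRight, add_sub_cancel_right] using this
  have hBB : (∑' n : ℤ, (starRingEnd ℂ) (x (n - 1)) * y n)
      = ∑' n : ℤ, (starRingEnd ℂ) (x n) * y (n + 1) := by
    have := (Equiv.subRight (1 : ℤ)).tsum_eq
      (fun m : ℤ => (starRingEnd ℂ) (x m) * y (m + 1))
    simpa only [Equiv.subRight_apply, sub_add_cancel] using this
  calc (∑' n : ℤ, (starRingEnd ℂ) ((H x) n) * y n)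
      = ∑' n : ℤ, ((starRingEnd ℂ) (x (n + 1)) * y n + ((starRingEnd ℂ) (x (n - 1)) * y n +
        (starRingEnd ℂ) (x n) * ((W n : ℂ) * y n))) := tsum_congr hL
    _ = (∑' n : ℤ, (starRingEnd ℂ) (x (n + 1)) * y n) +
        ((∑' n : ℤ, (starRingEnd ℂ) (x (n - 1)) * y n) +
         (∑' n : ℤ, (starRingEnd ℂ) (x n) * ((W n : ℂ) * y n))) := by
        rw [Summable.tsum_add S1 (S2.add S3), Summable.tsum_add S2 S3]
    _ = ∑' n : ℤ, (starRingEnd ℂ) (x n) * (H y) n := by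
        rw [hA, hBB, ← Summable.tsum_add T1 S3, ← Summable.tsum_add T2 (T1.add S3)]
        exact tsum_congr fun n => by rw [hR n]; ring

lemma resolvent_isUnit (W : ℤ → ℝ) (B : ℝ) (hB : ∀ n, |W n| ≤ B)
    (H : Seq2 →L[ℂ] Seq2) (hH : IsSchrodinger W H) (z : ℂ) (hz : z.im ≠ 0) :
    IsUnit (H - z • (1 : Seq2 →L[ℂ] Seq2)) := by
  by_contra h
  have hz' : z ∈ spectrum ℂ H := by
    rw [spectrum.mem_iff]
    intro hu
    apply h
    have : H - z • (1 : Seq2 →L[ℂ] Seq2) = -((algebraMap ℂ (Seq2 →L[ℂ] Seq2)) z - H) := by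
      rw [Algebra.algebraMap_eq_smul_one, neg_sub]
    rw [this]
    exact hu.neg
  exact hz ((schrodinger_selfAdjoint W B hB H hH).im_eq_zero_of_mem_spectrum hz')

set_option maxHeartbeats 1000000 in
lemma resolvent_eqn (W : ℤ → ℝ) (B : ℝ) (hB : ∀ n, |W n| ≤ B)
    (H : Seq2 →L[ℂ] Seq2) (hH : IsSchrodinger W H) (z : ℂ) (hz : z.im ≠ 0) (ψ : Seq2)
    (n : ℤ) :
    (Ring.inverse (H - z • (1 : Seq2 →L[ℂ] Seq2)) ψ) (n + 1) +
      (Ring.inverse (H - z • (1 : Seq2 →L[ℂ] Seq2)) ψ) (n - 1) +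
      (W n : ℂ) * (Ring.inverse (H - z • (1 : Seq2 →L[ℂ] Seq2)) ψ) n -
      z * (Ring.inverse (H - z • (1 : Seq2 →L[ℂ] Seq2)) ψ) n = ψ n := by
  set u : Seq2 := Ring.inverse (H - z • (1 : Seq2 →L[ℂ] Seq2)) ψ with hu
  have h1 : (H - z • (1 : Seq2 →L[ℂ] Seq2)) u = ψ := by
    rw [hu]
    have := Ring.mul_inverse_cancel _ (resolvent_isUnit W B hB H hH z hz)
    calc (H - z • (1 : Seq2 →L[ℂ] Seq2)) (Ring.inverse (H - z • (1 : Seq2 →L[ℂ] Seq2)) ψ)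
        = ((H - z • (1 : Seq2 →L[ℂ] Seq2)) * Ring.inverse (H - z • (1 : Seq2 →L[ℂ] Seq2))) ψ := rfl
      _ = ψ := by rw [this]; rfl
  have h2 : ((H - z • (1 : Seq2 →L[ℂ] Seq2)) u) n = (H u) n - z * u n := by
    rw [ContinuousLinearMap.sub_apply, lp.coeFn_sub, Pi.sub_apply,
      ContinuousLinearMap.smul_apply, ContinuousLinearMap.one_apply, lp.coeFn_smul,
      Pi.smul_apply, smul_eq_mul]
  rw [← hH u n, ← h2, h1]

/-- Formal solution with initial data at sites `a-1`, `a`. -/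
def solSeq (W : ℤ → ℝ) (E : ℂ) (a : ℤ) (c₀ c₁ : ℂ) : ℕ → ℂ
  | 0 => c₀
  | 1 => c₁
  | (n + 2) => (E - (W (a + n) : ℂ)) * solSeq W E a c₀ c₁ (n + 1) - solSeq W E a c₀ c₁ n

lemma solSeq_continuous (W : ℤ → ℝ) (a : ℤ) (c₀ c₁ : ℂ) (j : ℕ) :
    Continuous fun E : ℂ => solSeq W E a c₀ c₁ j := by
  induction j using Nat.strong_induction_on with
  | _ j ih =>
    match j with
    | 0 => simpa [solSeq] using continuous_const
    | 1 => simpa [solSeq] using continuous_const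
    | (n + 2) =>
      have h1 := ih (n + 1) (by omega)
      have h0 := ih n (by omega)
      simp only [solSeq]
      exact (((continuous_id.sub continuous_const).mul h1).sub h0)

/-- Extension to `ℤ`, zero to the left of `a - 1`. -/
def solExt (W : ℤ → ℝ) (E : ℂ) (a : ℤ) (c₀ c₁ : ℂ) (n : ℤ) : ℂ :=
  if a - 1 ≤ n then solSeq W E a c₀ c₁ (n - (a - 1)).toNat else 0

lemma solExt_continuous (W : ℤ → ℝ) (a : ℤ) (c₀ c₁ : ℂ) (n : ℤ) :
    Continuous fun E : ℂ => solExt W E a c₀ c₁ n := by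
  unfold solExt
  split
  · exact solSeq_continuous W a c₀ c₁ _
  · exact continuous_const

lemma solExt_a_sub_one (W : ℤ → ℝ) (E : ℂ) (a : ℤ) (c₀ c₁ : ℂ) :
    solExt W E a c₀ c₁ (a - 1) = c₀ := by
  simp [solExt, solSeq]

lemma solExt_a (W : ℤ → ℝ) (E : ℂ) (a : ℤ) (c₀ c₁ : ℂ) :
    solExt W E a c₀ c₁ a = c₁ := by
  have : (a - (a - 1)).toNat = 1 := by omega
  simp [solExt, this, solSeq]

lemma solExt_rec (W : ℤ → ℝ) (E : ℂ) (a : ℤ) (c₀ c₁ : ℂ) (n : ℤ) (hn : a ≤ n) :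
    solExt W E a c₀ c₁ (n + 1) + solExt W E a c₀ c₁ (n - 1) + (W n : ℂ) * solExt W E a c₀ c₁ n
      = E * solExt W E a c₀ c₁ n := by
  obtain ⟨k, rfl⟩ : ∃ k : ℕ, n = a + k := ⟨(n - a).toNat, by omega⟩
  have e2 : (a + (k : ℤ) + 1 - (a - 1)).toNat = k + 2 := by omega
  have e1 : (a + (k : ℤ) - (a - 1)).toNat = k + 1 := by omega
  have e0 : (a + (k : ℤ) - 1 - (a - 1)).toNat = k := by omega
  have c2 : a - 1 ≤ a + (k : ℤ) + 1 := by omega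
  have c1 : a - 1 ≤ a + (k : ℤ) := by omega
  have c0 : a - 1 ≤ a + (k : ℤ) - 1 := by omega
  simp only [solExt, if_pos c2, if_pos c1, if_pos c0, e2, e1, e0]
  show solSeq W E a c₀ c₁ (k + 2) + _ + _ = _
  rw [solSeq]
  ring

lemma solExt_eq_sol (W : ℤ → ℝ) (E₀ : ℝ) (v : ℤ → ℝ)
    (hv : ∀ n : ℤ, v (n + 1) + v (n - 1) + W n * v n = E₀ * v n) (a : ℤ) (j : ℕ) :
    solSeq W (E₀ : ℂ) a ((v (a - 1) : ℂ)) ((v a : ℂ)) j = ((v (a - 1 + j) : ℝ) : ℂ) := by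
  induction j using Nat.strong_induction_on with
  | _ j ih =>
    match j with
    | 0 => simp [solSeq]
    | 1 => simp [solSeq]
    | (n + 2) =>
      have h1 := ih (n + 1) (by omega)
      have h0 := ih n (by omega)
      rw [solSeq, h1, h0]
      have hrec := hv (a + n)
      have ea : a + (n : ℤ) + 1 = a - 1 + ((n : ℕ) + 2 : ℕ) := by push_cast; ring
      have eb : a - 1 + ((n : ℕ) + 1 : ℕ) = a + n := by push_cast; ring
      have ec : a - 1 + (n : ℤ) = a + n - 1 := by ring
      rw [eb, ec, ← ea]
      have : v (a + n + 1) = (E₀ - W (a + n)) * v (a + n) - v (a + n - 1) := by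
        have := hv (a + n); linarith
      rw [this]
      push_cast
      ring

/-- Discrete Green identity / summation by parts. -/
lemma green (W : ℤ → ℝ) (E : ℂ) (f g φ : ℤ → ℂ) (a b : ℤ) (hab : a ≤ b)
    (hf : ∀ n, a ≤ n → n ≤ b → f (n + 1) + f (n - 1) + (W n : ℂ) * f n = E * f n)
    (hg : ∀ n : ℤ, g (n + 1) + g (n - 1) + (W n : ℂ) * g n - E * g n = φ n) :
    ∑ n ∈ Finset.Icc a b, f n * φ n =
      (f b * g (b + 1) - f (b + 1) * g b) - (f (a - 1) * g a - f a * g (a - 1)) := by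
  revert hf
  refine Int.le_induction (m := a) (motive := fun b _ =>
      (∀ n, a ≤ n → n ≤ b → f (n + 1) + f (n - 1) + (W n : ℂ) * f n = E * f n) →
      ∑ n ∈ Finset.Icc a b, f n * φ n =
        (f b * g (b + 1) - f (b + 1) * g b) - (f (a - 1) * g a - f a * g (a - 1))) ?_ ?_ b hab
  · intro hf
    rw [Finset.Icc_self, Finset.sum_singleton]
    have h1 := hg a
    have h2 := hf a le_rfl le_rfl
    linear_combination f a * h1.symm + g a * h2
  · intro b hab ih hf
    have hins : Finset.Icc a (b + 1) = insert (b + 1) (Finset.Icc a b) := by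
      ext m; simp only [Finset.mem_Icc, Finset.mem_insert]; omega
    rw [hins, Finset.sum_insert (by simp)]
    rw [ih (fun n h1 h2 => hf n h1 (by omega))]
    have h1 := hg (b + 1)
    have h2 := hf (b + 1) (by omega) le_rfl
    have e1 : b + 1 + 1 = b + 2 := by ring
    have e2 : b + 1 - 1 = b := by ring
    rw [e1, e2] at h1 h2
    rw [e1]
    linear_combination f (b + 1) * h1.symm + g (b + 1) * h2

lemma cs2 (p q r s : ℝ) (hp : 0 ≤ p) (hq : 0 ≤ q) (hr : 0 ≤ r) (hs : 0 ≤ s) :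
    p * r + q * s ≤ Real.sqrt (p ^ 2 + q ^ 2) * Real.sqrt (r ^ 2 + s ^ 2) := by
  rw [← Real.sqrt_mul (by positivity)]
  rw [show (p ^ 2 + q ^ 2) * (r ^ 2 + s ^ 2) = (p * r + q * s) ^ 2 + (p * s - q * r) ^ 2 by ring]
  calc p * r + q * s = Real.sqrt ((p * r + q * s) ^ 2) := by
        rw [Real.sqrt_sq (by positivity)]
    _ ≤ _ := Real.sqrt_le_sqrt (by nlinarith [sq_nonneg (p * s - q * r)])

lemma solExt_at_E₀ (W : ℤ → ℝ) (E₀ : ℝ) (v : ℤ → ℝ)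
    (hv : ∀ n : ℤ, v (n + 1) + v (n - 1) + W n * v n = E₀ * v n) (a n : ℤ) (hn : a - 1 ≤ n) :
    solExt W (E₀ : ℂ) a ((v (a - 1) : ℂ)) ((v a : ℂ)) n = ((v n : ℝ) : ℂ) := by
  rw [solExt, if_pos hn, solExt_eq_sol W E₀ v hv a ((n - (a - 1)).toNat)]
  congr 2
  omega

set_option maxHeartbeats 1000000 in
lemma perZ (W : ℤ → ℝ) (B : ℝ) (hB : ∀ n, |W n| ≤ B)
    (H : Seq2 →L[ℂ] Seq2) (hH : IsSchrodinger W H) (ψ : Seq2) (ε : ℝ) (hε : 0 < ε)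
    (a b : ℤ) (hab : a ≤ b) (c₀ c₁ : ℝ) (z : ℂ) (him : z.im ≠ 0)
    (hsm : ‖(Ring.inverse (H - z • (1 : Seq2 →L[ℂ] Seq2)) ψ) (b + 1)‖ ^ 2 +
        ‖(Ring.inverse (H - z • (1 : Seq2 →L[ℂ] Seq2)) ψ) b‖ ^ 2 +
        ‖(Ring.inverse (H - z • (1 : Seq2 →L[ℂ] Seq2)) ψ) a‖ ^ 2 +
        ‖(Ring.inverse (H - z • (1 : Seq2 →L[ℂ] Seq2)) ψ) (a - 1)‖ ^ 2 < ε) :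
    ‖∑ n ∈ Finset.Icc a b,
        solExt W ((starRingEnd ℂ) z) a (c₀ : ℂ) (c₁ : ℂ) n * (starRingEnd ℂ) (ψ n)‖ ≤
      Real.sqrt ε * (Real.sqrt (‖solExt W ((starRingEnd ℂ) z) a (c₀ : ℂ) (c₁ : ℂ) (b + 1)‖ ^ 2 +
          ‖solExt W ((starRingEnd ℂ) z) a (c₀ : ℂ) (c₁ : ℂ) b‖ ^ 2) +
        Real.sqrt (c₁ ^ 2 + c₀ ^ 2)) := by
  set u : Seq2 := Ring.inverse (H - z • (1 : Seq2 →L[ℂ] Seq2)) ψ with hu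
  set E : ℂ := (starRingEnd ℂ) z with hE
  set f : ℤ → ℂ := solExt W E a (c₀ : ℂ) (c₁ : ℂ) with hf
  set g : ℤ → ℂ := fun n => (starRingEnd ℂ) (u n) with hg
  have hgeq : ∀ n : ℤ, g (n + 1) + g (n - 1) + (W n : ℂ) * g n - E * g n =
      (starRingEnd ℂ) (ψ n) := by
    intro n
    have h := congrArg (starRingEnd ℂ) (resolvent_eqn W B hB H hH z him ψ n)
    simpa only [map_add, map_sub, map_mul, Complex.conj_ofReal] using h
  have hfeq : ∀ n, a ≤ n → n ≤ b →
      f (n + 1) + f (n - 1) + (W n : ℂ) * f n = E * f n :=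
    fun n hn _ => solExt_rec W E a _ _ n hn
  have hgr := green W E f g (fun n => (starRingEnd ℂ) (ψ n)) a b hab hfeq hgeq
  rw [hgr]
  have hgnorm : ∀ n : ℤ, ‖g n‖ = ‖u n‖ := fun n => RCLike.norm_conj _
  -- bounds for boundary pieces
  have hub : ‖u b‖ ^ 2 + ‖u (b + 1)‖ ^ 2 ≤ ε := by
    nlinarith [sq_nonneg ‖u a‖, sq_nonneg ‖u (a - 1)‖]
  have hua : ‖u (a - 1)‖ ^ 2 + ‖u a‖ ^ 2 ≤ ε := by
    nlinarith [sq_nonneg ‖u (b + 1)‖, sq_nonneg ‖u b‖]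
  have hfa : ‖f a‖ ^ 2 = c₁ ^ 2 := by
    rw [hf, solExt_a]; simp [Complex.norm_real, Real.norm_eq_abs, sq_abs]
  have hfa1 : ‖f (a - 1)‖ ^ 2 = c₀ ^ 2 := by
    rw [hf, solExt_a_sub_one]; simp [Complex.norm_real, Real.norm_eq_abs, sq_abs]
  have hX : ‖f b * g (b + 1) - f (b + 1) * g b‖ ≤
      Real.sqrt (‖f (b + 1)‖ ^ 2 + ‖f b‖ ^ 2) * Real.sqrt ε := by
    have hXn : ‖f b * g (b + 1) - f (b + 1) * g b‖ ≤
        ‖f (b + 1)‖ * ‖g b‖ + ‖f b‖ * ‖g (b + 1)‖ := by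
      calc ‖f b * g (b + 1) - f (b + 1) * g b‖
          ≤ ‖f b * g (b + 1)‖ + ‖f (b + 1) * g b‖ := norm_sub_le _ _
        _ = _ := by rw [norm_mul, norm_mul]; ring
    refine le_trans (le_trans hXn (cs2 _ _ _ _ (norm_nonneg _) (norm_nonneg _)
      (norm_nonneg _) (norm_nonneg _))) ?_
    refine mul_le_mul_of_nonneg_left ?_ (Real.sqrt_nonneg _)
    apply Real.sqrt_le_sqrt
    rw [hgnorm, hgnorm]
    exact hub
  have hY : ‖f (a - 1) * g a - f a * g (a - 1)‖ ≤
      Real.sqrt (c₁ ^ 2 + c₀ ^ 2) * Real.sqrt ε := by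
    have hYn : ‖f (a - 1) * g a - f a * g (a - 1)‖ ≤
        ‖f a‖ * ‖g (a - 1)‖ + ‖f (a - 1)‖ * ‖g a‖ := by
      calc ‖f (a - 1) * g a - f a * g (a - 1)‖
          ≤ ‖f (a - 1) * g a‖ + ‖f a * g (a - 1)‖ := norm_sub_le _ _
        _ = _ := by rw [norm_mul, norm_mul]; ring
    refine le_trans (le_trans hYn (cs2 _ _ _ _ (norm_nonneg _) (norm_nonneg _)
      (norm_nonneg _) (norm_nonneg _))) ?_
    rw [hfa, hfa1]
    refine mul_le_mul_of_nonneg_left ?_ (Real.sqrt_nonneg _)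
    apply Real.sqrt_le_sqrt
    rw [hgnorm, hgnorm]
    exact hua
  calc ‖(f b * g (b + 1) - f (b + 1) * g b) - (f (a - 1) * g a - f a * g (a - 1))‖
      ≤ ‖f b * g (b + 1) - f (b + 1) * g b‖ + ‖f (a - 1) * g a - f a * g (a - 1)‖ :=
        norm_sub_le _ _
    _ ≤ Real.sqrt (‖f (b + 1)‖ ^ 2 + ‖f b‖ ^ 2) * Real.sqrt ε +
        Real.sqrt (c₁ ^ 2 + c₀ ^ 2) * Real.sqrt ε := add_le_add hX hY
    _ = Real.sqrt ε * (Real.sqrt (‖f (b + 1)‖ ^ 2 + ‖f b‖ ^ 2) +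
        Real.sqrt (c₁ ^ 2 + c₀ ^ 2)) := by ring

set_option maxHeartbeats 2000000 in
/-- If the resolvent `u_z = (H-z)⁻¹ψ` stays small at the boundary of the
window `[a,b]` for `z` near `E₀`, then `ψ` is almost orthogonal on `[a,b]` to every solution
at energy `E₀`. -/
theorem stmt8 (W : ℤ → ℝ) (hW : ∃ B : ℝ, ∀ n : ℤ, |W n| ≤ B)
    (H : Seq2 →L[ℂ] Seq2) (hH : IsSchrodinger W H)
    (ψ : Seq2) (E₀ : ℝ) (ε : ℝ) (hε : 0 < ε) (a b : ℤ) (hab : a ≤ b)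
    (hres : ∃ l : ℝ, l < ε ∧
      Filter.Tendsto (fun δ : ℝ => sInf {r : ℝ | ∃ z : ℂ, z.im ≠ 0 ∧
          ‖z - (E₀ : ℂ)‖ < δ ∧
          r = ‖(Ring.inverse (H - z • (1 : Seq2 →L[ℂ] Seq2)) ψ) (b + 1)‖ ^ 2 +
              ‖(Ring.inverse (H - z • (1 : Seq2 →L[ℂ] Seq2)) ψ) b‖ ^ 2 +
              ‖(Ring.inverse (H - z • (1 : Seq2 →L[ℂ] Seq2)) ψ) a‖ ^ 2 +
              ‖(Ring.inverse (H - z • (1 : Seq2 →L[ℂ] Seq2)) ψ) (a - 1)‖ ^ 2})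
        (nhdsWithin 0 (Set.Ioi 0)) (nhds l)) :
    ∀ v : ℤ → ℝ, IsSolution W E₀ v →
      ‖∑ n ∈ Finset.Icc a b, (v n : ℂ) * (starRingEnd ℂ) (ψ n)‖ ≤
        Real.sqrt ε * (Real.sqrt (v (b + 1) ^ 2 + v b ^ 2) +
          Real.sqrt (v a ^ 2 + v (a - 1) ^ 2)) := by
  obtain ⟨B, hB⟩ := hW
  obtain ⟨l, hl, htend⟩ := hres
  intro v hv
  -- Step 1: extract witnesses near `E₀`
  have key : ∀ δ : ℝ, 0 < δ → ∃ z : ℂ, z.im ≠ 0 ∧ ‖z - (E₀ : ℂ)‖ < δ ∧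
      ‖(Ring.inverse (H - z • (1 : Seq2 →L[ℂ] Seq2)) ψ) (b + 1)‖ ^ 2 +
        ‖(Ring.inverse (H - z • (1 : Seq2 →L[ℂ] Seq2)) ψ) b‖ ^ 2 +
        ‖(Ring.inverse (H - z • (1 : Seq2 →L[ℂ] Seq2)) ψ) a‖ ^ 2 +
        ‖(Ring.inverse (H - z • (1 : Seq2 →L[ℂ] Seq2)) ψ) (a - 1)‖ ^ 2 < ε := by
    intro δ hδ
    have hev := htend.eventually_lt_const hl
    obtain ⟨δ₀, hδ₀, hsub⟩ := Metric.mem_nhdsWithin_iff.1 hev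
    set δ' : ℝ := min (δ₀ / 2) δ with hδ'
    have hδ'pos : 0 < δ' := lt_min (by linarith) hδ
    have hmem : δ' ∈ Metric.ball (0 : ℝ) δ₀ ∩ Set.Ioi 0 := by
      constructor
      · rw [Metric.mem_ball, Real.dist_eq, sub_zero, abs_of_pos hδ'pos]
        exact lt_of_le_of_lt (min_le_left _ _) (by linarith)
      · exact hδ'pos
    have hinf := hsub hmem
    -- the set is nonempty and bounded below
    set S := {r : ℝ | ∃ z : ℂ, z.im ≠ 0 ∧ ‖z - (E₀ : ℂ)‖ < δ' ∧
          r = ‖(Ring.inverse (H - z • (1 : Seq2 →L[ℂ] Seq2)) ψ) (b + 1)‖ ^ 2 +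
              ‖(Ring.inverse (H - z • (1 : Seq2 →L[ℂ] Seq2)) ψ) b‖ ^ 2 +
              ‖(Ring.inverse (H - z • (1 : Seq2 →L[ℂ] Seq2)) ψ) a‖ ^ 2 +
              ‖(Ring.inverse (H - z • (1 : Seq2 →L[ℂ] Seq2)) ψ) (a - 1)‖ ^ 2} with hS
    have hne : S.Nonempty := by
      refine ⟨_, (E₀ : ℂ) + (δ' / 2) * Complex.I, ?_, ?_, rfl⟩
      · simp [Complex.add_im, Complex.I_im]
        positivity
      · have : (E₀ : ℂ) + (δ' / 2) * Complex.I - (E₀ : ℂ) = ((δ' / 2 : ℝ)) * Complex.I := by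
          push_cast; ring
        rw [this]
        rw [norm_mul, Complex.norm_I, mul_one, Complex.norm_real, Real.norm_eq_abs, abs_of_pos (by linarith)]
        linarith
    have hbdd : BddBelow S := by
      refine ⟨0, fun r hr => ?_⟩
      obtain ⟨z, _, _, rfl⟩ := hr
      positivity
    have := (csInf_lt_iff hbdd hne).1 hinf
    obtain ⟨r, hrS, hrε⟩ := this
    obtain ⟨z, h1, h2, rfl⟩ := hrS
    exact ⟨z, h1, lt_of_lt_of_le h2 (le_trans (min_le_right _ _) le_rfl), hrε⟩
  choose zs him habs hsmall using fun k : ℕ => key (1 / ((k : ℝ) + 1)) (by positivity)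
  -- Step 2: limits
  have htz : Filter.Tendsto zs Filter.atTop (nhds (E₀ : ℂ)) := by
    rw [tendsto_iff_dist_tendsto_zero]
    refine squeeze_zero (fun k => dist_nonneg) (fun k => ?_) tendsto_one_div_add_atTop_nhds_zero_nat
    rw [dist_eq_norm]
    exact le_of_lt (habs k)
  have htE : Filter.Tendsto (fun k => (starRingEnd ℂ) (zs k)) Filter.atTop
      (nhds (E₀ : ℂ)) := by
    have h1 : Filter.Tendsto (fun k => (starRingEnd ℂ) (zs k)) Filter.atTop
        (nhds ((starRingEnd ℂ) (E₀ : ℂ))) := (continuous_star.tendsto _).comp htz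
    rwa [Complex.conj_ofReal] at h1
  set fk : ℕ → ℤ → ℂ := fun k n =>
    solExt W ((starRingEnd ℂ) (zs k)) a ((v (a - 1) : ℂ)) ((v a : ℂ)) n with hfk
  have hfklim : ∀ n : ℤ, a - 1 ≤ n →
      Filter.Tendsto (fun k => fk k n) Filter.atTop (nhds ((v n : ℂ))) := by
    intro n hn
    have h1 : Filter.Tendsto (fun k => fk k n) Filter.atTop
        (nhds (solExt W (E₀ : ℂ) a ((v (a - 1) : ℂ)) ((v a : ℂ)) n)) :=
      ((solExt_continuous W a _ _ n).tendsto _).comp htE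
    rwa [solExt_at_E₀ W E₀ v hv a n hn] at h1
  -- Step 3: the bound for each k
  have hbound : ∀ k : ℕ,
      ‖∑ n ∈ Finset.Icc a b, fk k n * (starRingEnd ℂ) (ψ n)‖ ≤
        Real.sqrt ε * (Real.sqrt (‖fk k (b + 1)‖ ^ 2 + ‖fk k b‖ ^ 2) +
          Real.sqrt (v a ^ 2 + v (a - 1) ^ 2)) :=
    fun k => perZ W B hB H hH ψ ε hε a b hab (v (a - 1)) (v a) (zs k) (him k) (hsmall k)
  -- Step 4: pass to the limit
  have hLlim : Filter.Tendsto (fun k => ‖∑ n ∈ Finset.Icc a b, fk k n * (starRingEnd ℂ) (ψ n)‖)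
      Filter.atTop (nhds ‖∑ n ∈ Finset.Icc a b, (v n : ℂ) * (starRingEnd ℂ) (ψ n)‖) := by
    apply Filter.Tendsto.norm
    apply tendsto_finset_sum
    intro n hn
    have hn' : a - 1 ≤ n := by have := (Finset.mem_Icc.1 hn).1; omega
    exact (hfklim n hn').mul_const _
  have hRlim : Filter.Tendsto (fun k => Real.sqrt ε *
      (Real.sqrt (‖fk k (b + 1)‖ ^ 2 + ‖fk k b‖ ^ 2) + Real.sqrt (v a ^ 2 + v (a - 1) ^ 2)))
      Filter.atTop (nhds (Real.sqrt ε * (Real.sqrt (v (b + 1) ^ 2 + v b ^ 2) +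
        Real.sqrt (v a ^ 2 + v (a - 1) ^ 2)))) := by
    apply Filter.Tendsto.const_mul
    apply Filter.Tendsto.add_const
    have h1 : Filter.Tendsto (fun k => ‖fk k (b + 1)‖ ^ 2 + ‖fk k b‖ ^ 2) Filter.atTop
        (nhds (v (b + 1) ^ 2 + v b ^ 2)) := by
      have e1 : ‖((v (b + 1) : ℝ) : ℂ)‖ ^ 2 = v (b + 1) ^ 2 := by
        rw [Complex.norm_real, Real.norm_eq_abs, sq_abs]
      have e2 : ‖((v b : ℝ) : ℂ)‖ ^ 2 = v b ^ 2 := by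
        rw [Complex.norm_real, Real.norm_eq_abs, sq_abs]
      rw [← e1, ← e2]
      exact (((hfklim (b + 1) (by omega)).norm.pow 2).add ((hfklim b (by omega)).norm.pow 2))
    exact (Real.continuous_sqrt.tendsto _).comp h1
  have hfinal := le_of_tendsto_of_tendsto' hLlim hRlim hbound
  exact hfinal
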